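/- Every inclusion-wise minimal DM-irreducible spanning subgraph of a DM-irreducible balanced bipartite graph on 2n vertices (n ≥ 2 on each side) has at most 3n - 2 edges. -/

import Mathlib

open Sum

/-- Arc relation of the auxiliary digraph. -/
def Step {α β : Type*} (E M : Set (α × β)) : (α ⊕ β) → (α ⊕ β) → Prop
  | inl a, inr b => (a, b) ∈ E
  | inr b, inl a => (a, b) ∈ M
  | _, _ => False

def StronglyConnected {V : Type*} (R : V → V → Prop) : Prop :=
  ∀ u v : V, Relation.ReflTransGen R u v

def IsPerfectMatching {α β : Type*} (E M : Set (α × β)) : Prop :=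
  M ⊆ E ∧ (∀ a : α, ∃! b : β, (a, b) ∈ M) ∧ (∀ b : β, ∃! a : α, (a, b) ∈ M)

def DMIrreducible {α β : Type*} (E : Set (α × β)) : Prop :=
  ∃ M, IsPerfectMatching E M ∧ StronglyConnected (Step E M)

/-- Paths of a given length. -/
def ChainLen {α : Type*} (R : α → α → Prop) : ℕ → α → α → Prop
  | 0, a, b => a = b
  | (n+1), a, b => ∃ c, ChainLen R n a c ∧ R c b

lemma reflTransGen_iff_chainLen {α : Type*} (R : α → α → Prop) (a b : α) :
    Relation.ReflTransGen R a b ↔ ∃ n, ChainLen R n a b := by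
  constructor
  · intro h
    induction h with
    | refl => exact ⟨0, rfl⟩
    | tail _ hr ih => obtain ⟨n, hn⟩ := ih; exact ⟨n + 1, _, hn, hr⟩
  · rintro ⟨n, hn⟩
    induction n generalizing b with
    | zero => cases hn; exact .refl
    | succ n ih => obtain ⟨c, hc, hr⟩ := hn; exact (ih c hc).tail hr

/-- A BFS out-tree: a set of at most `n - 1` arcs of `R` from which the root reaches
everything. -/
lemma exists_out_tree {α : Type*} [Fintype α] (R : α → α → Prop) (r : α)
    (hR : ∀ v, Relation.ReflTransGen R r v) :
    ∃ T : Set (α × α), T.ncard ≤ Fintype.card α - 1 ∧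
      (∀ p ∈ T, R p.1 p.2) ∧ ∀ v, Relation.ReflTransGen (fun x y => (x, y) ∈ T) r v := by
  classical
  have hex : ∀ v, ∃ n, ChainLen R n r v := fun v => (reflTransGen_iff_chainLen R r v).mp (hR v)
  set d : α → ℕ := fun v => Nat.find (hex v) with hd
  have hspec : ∀ v, ChainLen R (d v) r v := fun v => Nat.find_spec (hex v)
  have hP : ∀ v, v ≠ r → ∃ c, R c v ∧ d c < d v := by
    intro v hv
    have hdv : d v ≠ 0 := by
      intro h0
      have := hspec v
      rw [h0] at this
      exact hv this.symm
    obtain ⟨k, hk⟩ := Nat.exists_eq_succ_of_ne_zero hdv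
    have h2 := hspec v
    rw [hk] at h2
    obtain ⟨c, hc1, hc2⟩ := h2
    have : d c ≤ k := Nat.find_le hc1
    exact ⟨c, hc2, by omega⟩
  set parent : α → α := fun v => if h : v ≠ r then (hP v h).choose else r with hparent
  set T : Set (α × α) := (fun v => (parent v, v)) '' {v | v ≠ r} with hT
  have hTcard : T.ncard ≤ Fintype.card α - 1 := by
    have h1 : T.ncard ≤ {v | v ≠ r}.ncard := Set.ncard_image_le (Set.toFinite _)
    have h2 : {v : α | v ≠ r} = Set.univ \ {r} := by ext v; simp
    rw [h2, Set.ncard_diff (by simp), Set.ncard_univ, Set.ncard_singleton,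
      Nat.card_eq_fintype_card] at h1
    exact h1
  refine ⟨T, hTcard, ?_, ?_⟩
  · rintro p ⟨v, hv, rfl⟩
    have hpv : parent v = (hP v hv).choose := dif_pos hv
    simpa [hpv] using (hP v hv).choose_spec.1
  · have hreach : ∀ k v, d v ≤ k → Relation.ReflTransGen (fun x y => (x, y) ∈ T) r v := by
      intro k
      induction k with
      | zero =>
        intro v hv
        have h0 : d v = 0 := Nat.le_zero.mp hv
        have := hspec v
        rw [h0] at this
        exact this ▸ Relation.ReflTransGen.refl
      | succ k ih =>
        intro v hv
        by_cases h : v = r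
        · exact h ▸ Relation.ReflTransGen.refl
        · have hpv : parent v = (hP v h).choose := dif_pos h
          have hlt : d (hP v h).choose < d v := (hP v h).choose_spec.2
          have hdp : d (parent v) ≤ k := by rw [hpv]; omega
          exact (ih _ hdp).tail ⟨v, h, rfl⟩
    exact fun v => hreach (d v) v le_rfl

/-- Every inclusion-wise minimal DM-irreducible spanning subgraph of a DM-irreducible
balanced bipartite graph on `2n` vertices (`n ≥ 2`) has at most `3n - 2` edges. -/
theorem stmt16 {α β : Type*} [Fintype α] [Fintype β]
    (hbal : Fintype.card α = Fintype.card β) (hn : 2 ≤ Fintype.card α)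
    (E F : Set (α × β)) (hE : DMIrreducible E)
    (hFE : F ⊆ E) (hF : DMIrreducible F)
    (hmin : ∀ F' : Set (α × β), F' ⊂ F → ¬ DMIrreducible F') :
    F.ncard ≤ 3 * Fintype.card α - 2 := by
  classical
  obtain ⟨M, hPM, hSC⟩ := hF
  obtain ⟨hMF, hm1, hm2⟩ := hPM
  set m : α → β := fun a => (hm1 a).choose with hm_def
  have hmM : ∀ a, (a, m a) ∈ M := fun a => (hm1 a).choose_spec.1
  have hm_uniq : ∀ a b, (a, b) ∈ M → b = m a := fun a b h => (hm1 a).choose_spec.2 b h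
  set μ : β → α := fun b => (hm2 b).choose with hμ_def
  have hμM : ∀ b, (μ b, b) ∈ M := fun b => (hm2 b).choose_spec.1
  have hμ_uniq : ∀ a b, (a, b) ∈ M → a = μ b := fun a b h => (hm2 b).choose_spec.2 a h
  have hμm : ∀ a, μ (m a) = a := fun a => (hμ_uniq a (m a) (hmM a)).symm
  have hmμ : ∀ b, m (μ b) = b := fun b => (hm_uniq (μ b) b (hμM b)).symm
  -- the contracted arc map
  set f : α × β → α × α := fun e => (e.1, μ e.2) with hf_def
  have hf_inj : Function.Injective f := by
    rintro ⟨a, b⟩ ⟨a', b'⟩ h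
    simp only [f, Prod.mk.injEq] at h
    obtain ⟨h1, h2⟩ := h
    have := congrArg m h2
    rw [hmμ, hmμ] at this
    exact Prod.ext h1 this
  set A : Set (α × α) := f '' (F \ M) with hA_def
  set RA : α → α → Prop := fun x y => (x, y) ∈ A with hRA_def
  -- project Step-paths to contracted paths
  have step_proj : ∀ u v, Step F M u v →
      Relation.ReflTransGen RA (Sum.elim id μ u) (Sum.elim id μ v) := by
    rintro (a | b) (a' | b') h
    · exact (h : False).elim
    · -- (a, b') ∈ F
      by_cases hM : (a, b') ∈ M
      · have : μ b' = a := (hμ_uniq a b' hM).symm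
        simp only [Sum.elim_inl, Sum.elim_inr, id, this]
        exact .refl
      · exact Relation.ReflTransGen.single ⟨(a, b'), ⟨h, hM⟩, rfl⟩
    · have : μ b = a' := (hμ_uniq a' b h).symm
      simp only [Sum.elim_inl, Sum.elim_inr, id, this]
      exact .refl
    · exact (h : False).elim
  have SC_RA : ∀ x y : α, Relation.ReflTransGen RA x y := by
    intro x y
    have := Relation.ReflTransGen.lift' (Sum.elim id μ) step_proj _ _ (hSC (inl x) (inl y))
    simpa [Function.onFun] using this
  have hcardpos : 0 < Fintype.card α := by omega
  obtain ⟨r⟩ : Nonempty α := Fintype.card_pos_iff.mp hcardpos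
  obtain ⟨T1, hT1card, hT1sub, hT1reach⟩ := exists_out_tree RA r (fun v => SC_RA r v)
  obtain ⟨T2', hT2card, hT2sub, hT2reach⟩ :=
    exists_out_tree (Function.swap RA) r
      (fun v => Relation.reflTransGen_swap.mpr (SC_RA v r))
  set T2 : Set (α × α) := Prod.swap '' T2' with hT2_def
  -- A is contained in the two trees
  have hAsub : A ⊆ T1 ∪ T2 := by
    by_contra hcon
    obtain ⟨x, hxA, hxT⟩ := Set.not_subset.mp hcon
    obtain ⟨e, heFM, hfe⟩ := hxA
    set F' : Set (α × β) := F \ {e} with hF'_def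
    have hss : F' ⊂ F := by
      refine ⟨Set.diff_subset, fun hsub => ?_⟩
      exact (hsub heFM.1).2 rfl
    refine hmin F' hss ?_
    have hMF' : M ⊆ F' := by
      intro p hp
      refine ⟨hMF hp, fun h => heFM.2 ?_⟩
      rw [Set.mem_singleton_iff] at h
      exact h ▸ hp
    refine ⟨M, ⟨hMF', hm1, hm2⟩, ?_⟩
    -- each tree arc lifts to a path in Step F' M
    have harc : ∀ p q : α, (p, q) ∈ T1 ∪ T2 →
        Relation.ReflTransGen (Step F' M) (inl p) (inl q) := by
      intro p q hpq
      have hpqA : (p, q) ∈ A := by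
        cases hpq with
        | inl h => exact hT1sub _ h
        | inr h =>
          obtain ⟨y, hy, hy2⟩ := h
          have : y = (q, p) := by
            have := congrArg Prod.swap hy2
            simpa using this
          exact hT2sub (q, p) (this ▸ hy)
      obtain ⟨e', he'FM, hfe'⟩ := hpqA
      obtain ⟨p', b'⟩ := e'
      have he'1 : p' = p := congrArg Prod.fst hfe'
      have he'2 : μ b' = q := congrArg Prod.snd hfe'
      have hne : (p', b') ≠ e := by
        intro h
        rw [h, hfe] at hfe'
        exact hxT (hfe' ▸ hpq)
      have hF'mem : (p', b') ∈ F' := ⟨he'FM.1, by simpa using hne⟩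
      have hstep1 : Step F' M (inl p) (inr b') := by
        show (p, b') ∈ F'
        rwa [← he'1]
      have hstep2 : Step F' M (inr b') (inl q) := by
        show (q, b') ∈ M
        rw [← he'2]
        exact hμM b'
      exact (Relation.ReflTransGen.single hstep1).tail hstep2
    have hll : ∀ p q : α, Relation.ReflTransGen (Step F' M) (inl p) (inl q) := by
      intro p q
      have h1 : Relation.ReflTransGen (fun x y => (x, y) ∈ T1 ∪ T2) p r := by
        have h0 : Relation.ReflTransGen (Function.swap fun x y => (x, y) ∈ T2') p r :=
          Relation.reflTransGen_swap.mpr (hT2reach p)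
        refine Relation.ReflTransGen.mono ?_ _ _ h0
        intro x y hxy
        exact Or.inr ⟨(y, x), hxy, rfl⟩
      have h2 : Relation.ReflTransGen (fun x y => (x, y) ∈ T1 ∪ T2) r q :=
        Relation.ReflTransGen.mono (fun x y hxy => Or.inl hxy) _ _ (hT1reach q)
      have h3 := h1.trans h2
      have := Relation.ReflTransGen.lift' (Sum.inl : α → α ⊕ β)
        (fun a b hab => harc a b hab) _ _ h3
      exact this
    intro u v
    have key : ∀ w : α ⊕ β, Relation.ReflTransGen (Step F' M) w (inl (Sum.elim id μ w)) ∧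
        Relation.ReflTransGen (Step F' M) (inl (Sum.elim id μ w)) w := by
      rintro (a | b)
      · exact ⟨.refl, .refl⟩
      · constructor
        · exact Relation.ReflTransGen.single (show (μ b, b) ∈ M from hμM b)
        · exact Relation.ReflTransGen.single (show (μ b, b) ∈ F' from hMF' (hμM b))
    exact ((key u).1.trans (hll _ _)).trans (key v).2
  -- counting
  have hAcard : A.ncard = (F \ M).ncard := Set.ncard_image_of_injective _ hf_inj
  have hT2card' : T2.ncard = T2'.ncard :=
    Set.ncard_image_of_injective _ Prod.swap_injective
  have hAle : A.ncard ≤ 2 * Fintype.card α - 2 := by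
    have h1 : A.ncard ≤ (T1 ∪ T2).ncard := Set.ncard_le_ncard hAsub (Set.toFinite _)
    have h2 : (T1 ∪ T2).ncard ≤ T1.ncard + T2.ncard := Set.ncard_union_le _ _
    omega
  have hMcard : M.ncard = Fintype.card α := by
    have hMeq : M = (fun a => (a, m a)) '' Set.univ := by
      ext ⟨a, b⟩
      constructor
      · intro h
        exact ⟨a, Set.mem_univ a, by show (a, m a) = (a, b); rw [hm_uniq a b h]⟩
      · rintro ⟨a', -, h⟩
        rw [← h]
        exact hmM a'
    rw [hMeq, Set.ncard_image_of_injective _ (fun a a' h => congrArg Prod.fst h),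
      Set.ncard_univ, Nat.card_eq_fintype_card]
  have hdiff : (F \ M).ncard = F.ncard - M.ncard := Set.ncard_diff hMF (Set.toFinite _)
  have hle : M.ncard ≤ F.ncard := Set.ncard_le_ncard hMF (Set.toFinite _)
  omega
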